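/- An n×n Hermitian complex matrix A is positive definite if and only if for every k with 1 ≤ k ≤ n, the sum of all k×k principal minors of A is positive. -/

import Mathlib

open scoped ComplexOrder
open scoped Matrix

/-- The sum of all `k × k` principal minors of the matrix `A`. -/
noncomputable def principalMinorSum {n : ℕ} (A : Matrix (Fin n) (Fin n) ℂ) (k : ℕ) : ℂ :=
  ∑ s ∈ Finset.powersetCard k (Finset.univ : Finset (Fin n)),
    (A.submatrix (fun i : {x // x ∈ s} => (i : Fin n)) (fun j : {x // x ∈ s} => (j : Fin n))).det

lemma det_of_single_rows {n : ℕ} (s : Finset (Fin n)) (M : Matrix (Fin n) (Fin n) ℂ)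
    (h : ∀ i ∈ s, M i = Pi.single i 1) :
    M.det = (M.submatrix (fun i : {x // ¬ x ∈ s} => (i : Fin n))
      (fun j : {x // ¬ x ∈ s} => (j : Fin n))).det := by
  classical
  let e : {x // x ∈ s} ⊕ {x // ¬ x ∈ s} ≃ Fin n := Equiv.sumCompl (· ∈ s)
  rw [← Matrix.det_submatrix_equiv_self e M]
  have hblock : M.submatrix e e =
      Matrix.fromBlocks 1 0
        (M.submatrix (fun i : {x // ¬ x ∈ s} => (i : Fin n)) (fun j : {x // x ∈ s} => (j : Fin n)))
        (M.submatrix (fun i : {x // ¬ x ∈ s} => (i : Fin n)) (fun j : {x // ¬ x ∈ s} => (j : Fin n))) := by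
    ext i j
    cases i with
    | inl i =>
      cases j with
      | inl j =>
        simp only [Matrix.submatrix_apply, Matrix.fromBlocks_apply₁₁, e, Equiv.sumCompl_apply_inl]
        rw [h i i.2, Matrix.one_apply, Pi.single_apply]
        simp [@eq_comm _ j i]
      | inr j =>
        simp only [Matrix.submatrix_apply, Matrix.fromBlocks_apply₁₂, e, Equiv.sumCompl_apply_inl,
          Equiv.sumCompl_apply_inr, Matrix.zero_apply]
        rw [h i i.2, Pi.single_apply]
        have : (j : Fin n) ≠ (i : Fin n) := fun hij => j.2 (hij ▸ i.2)
        simp [this]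
    | inr i => cases j <;> rfl
  rw [hblock, Matrix.det_fromBlocks_zero₁₂, Matrix.det_one, one_mul]

lemma det_add_smul_one {n : ℕ} (A : Matrix (Fin n) (Fin n) ℂ) (x : ℂ) :
    (A + x • (1 : Matrix (Fin n) (Fin n) ℂ)).det =
      ∑ s : Finset (Fin n), x ^ s.card *
        (A.submatrix (fun i : {x // ¬ x ∈ s} => (i : Fin n))
          (fun j : {x // ¬ x ∈ s} => (j : Fin n))).det := by
  classical
  have key : (A + x • (1 : Matrix (Fin n) (Fin n) ℂ)).det
      = ∑ s : Finset (Fin n),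
        (Matrix.detRowAlternating (s.piecewise (x • (1 : Matrix (Fin n) (Fin n) ℂ)) A) : ℂ) := by
    have h1 : A + x • (1 : Matrix (Fin n) (Fin n) ℂ)
        = (x • (1 : Matrix (Fin n) (Fin n) ℂ)) + A := add_comm _ _
    rw [h1]
    exact (Matrix.detRowAlternating : (Fin n → ℂ) [⋀^Fin n]→ₗ[ℂ] ℂ).toMultilinearMap.map_add_univ
      (x • (1 : Matrix (Fin n) (Fin n) ℂ)) A
  rw [key]
  refine Finset.sum_congr rfl fun s _ => ?_
  set N : Matrix (Fin n) (Fin n) ℂ := s.piecewise (fun i => Pi.single i (1:ℂ)) A with hN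
  have hNs : ∀ i ∈ s, N i = Pi.single i 1 := fun i hi => Finset.piecewise_eq_of_mem _ _ _ hi
  have hpw : s.piecewise (x • (1 : Matrix (Fin n) (Fin n) ℂ)) A
      = s.piecewise (fun i => (fun _ => x) i • N i) N := by
    ext i j
    by_cases hi : i ∈ s
    · simp only [Finset.piecewise, hi, if_true, hNs i hi]
      simp [Matrix.one_apply, Pi.single_apply, eq_comm]
    · simp [Finset.piecewise, hi, hN]
  have h2 := (Matrix.detRowAlternating : (Fin n → ℂ) [⋀^Fin n]→ₗ[ℂ] ℂ).toMultilinearMap.map_piecewise_smul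
      (fun _ => x) N s
  simp only [AlternatingMap.coe_multilinearMap] at h2
  rw [hpw, h2]
  have : (Matrix.detRowAlternating N : ℂ) = N.det := rfl
  rw [Finset.prod_const, smul_eq_mul, this, det_of_single_rows s N hNs]
  congr 2
  ext i j
  exact congrFun (Finset.piecewise_eq_of_notMem s (fun i => Pi.single i (1:ℂ)) A i.2) j

lemma det_add_smul_one' {n : ℕ} (A : Matrix (Fin n) (Fin n) ℂ) (x : ℂ) :
    (A + x • (1 : Matrix (Fin n) (Fin n) ℂ)).det =
      ∑ k ∈ Finset.range (n + 1), principalMinorSum A k * x ^ (n - k) := by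
  classical
  rw [det_add_smul_one]
  have h1 : ∑ s : Finset (Fin n), x ^ s.card *
        (A.submatrix (fun i : {x // ¬ x ∈ s} => (i : Fin n))
          (fun j : {x // ¬ x ∈ s} => (j : Fin n))).det
      = ∑ s : Finset (Fin n), x ^ (n - s.card) *
        (A.submatrix (fun i : {x // x ∈ s} => (i : Fin n))
          (fun j : {x // x ∈ s} => (j : Fin n))).det := by
    refine Fintype.sum_bijective (compl : Finset (Fin n) → Finset (Fin n)) compl_involutive.bijective _ _ fun s => ?_
    have hle : s.card ≤ n := by simpa using Finset.card_le_univ s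
    have hcard : n - (sᶜ : Finset (Fin n)).card = s.card := by
      rw [Finset.card_compl, Fintype.card_fin, Nat.sub_sub_self hle]
    rw [hcard]
    congr 1
    let e : {x // x ∈ sᶜ} ≃ {x // ¬ x ∈ s} := Equiv.subtypeEquivRight (by simp)
    have h3 : (A.submatrix (fun i : {x // x ∈ sᶜ} => (i : Fin n)) (fun j : {x // x ∈ sᶜ} => (j : Fin n)))
        = (A.submatrix (fun i : {x // ¬ x ∈ s} => (i : Fin n))
            (fun j : {x // ¬ x ∈ s} => (j : Fin n))).submatrix e e := rfl
    rw [h3, Matrix.det_submatrix_equiv_self]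
  rw [h1, ← Finset.powerset_univ, Finset.powerset_card_disjiUnion,
    Finset.sum_disjiUnion _ _ ((Finset.pairwise_disjoint_powersetCard _).set_pairwise _),
    Finset.card_univ, Fintype.card_fin]
  refine Finset.sum_congr rfl fun k _ => ?_
  rw [principalMinorSum, Finset.sum_mul]
  refine Finset.sum_congr rfl fun s hs => ?_
  rw [(Finset.mem_powersetCard.mp hs).2, mul_comm]

lemma det_add_eq_prod_eig {n : ℕ} (A : Matrix (Fin n) (Fin n) ℂ) (hA : A.IsHermitian) (x : ℂ) :
    (A + x • (1 : Matrix (Fin n) (Fin n) ℂ)).det = ∏ i, ((hA.eigenvalues i : ℂ) + x) := by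
  set U : Matrix (Fin n) (Fin n) ℂ := (Matrix.IsHermitian.eigenvectorUnitary hA : Matrix (Fin n) (Fin n) ℂ)
  have hU : U * star U = 1 := Matrix.mem_unitaryGroup_iff.mp (Matrix.IsHermitian.eigenvectorUnitary hA).2
  set D : Matrix (Fin n) (Fin n) ℂ := Matrix.diagonal (RCLike.ofReal ∘ hA.eigenvalues)
  have h1 : A + x • (1 : Matrix (Fin n) (Fin n) ℂ) = U * (D + x • 1) * star U := by
    rw [Matrix.mul_add, Matrix.add_mul]
    congr 1
    · exact hA.spectral_theorem
    · rw [Matrix.mul_smul, Matrix.smul_mul, Matrix.mul_one, hU]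
  rw [h1, Matrix.det_mul_right_comm, hU, Matrix.one_mul, Matrix.smul_one_eq_diagonal,
    Matrix.diagonal_add, Matrix.det_diagonal]
  simp

lemma poly_eq {n : ℕ} (A : Matrix (Fin n) (Fin n) ℂ) (hA : A.IsHermitian) :
    (∑ k ∈ Finset.range (n + 1), Polynomial.C (principalMinorSum A k) * Polynomial.X ^ (n - k))
      = ∏ i, (Polynomial.X + Polynomial.C ((hA.eigenvalues i : ℂ))) := by
  apply Polynomial.funext
  intro x
  rw [Polynomial.eval_finset_sum, Polynomial.eval_prod]
  simp only [Polynomial.eval_mul, Polynomial.eval_C, Polynomial.eval_pow, Polynomial.eval_X,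
    Polynomial.eval_add]
  rw [← det_add_smul_one' A x, det_add_eq_prod_eig A hA x]
  exact Finset.prod_congr rfl fun i _ => add_comm _ _

lemma pms_eq_esymm {n : ℕ} (A : Matrix (Fin n) (Fin n) ℂ) (hA : A.IsHermitian) {k : ℕ}
    (hk2 : k ≤ n) :
    principalMinorSum A k =
      ((∑ t ∈ Finset.powersetCard k (Finset.univ : Finset (Fin n)),
        ∏ i ∈ t, hA.eigenvalues i : ℝ) : ℂ) := by
  have h := congrArg (fun p => Polynomial.coeff p (n - k)) (poly_eq A hA)
  have hr : (∏ i : Fin n, (Polynomial.X + Polynomial.C ((hA.eigenvalues i : ℂ)))).coeff (n - k)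
      = ∑ t ∈ Finset.powersetCard k (Finset.univ : Finset (Fin n)),
          ∏ i ∈ t, ((hA.eigenvalues i : ℂ)) := by
    have := Finset.prod_X_add_C_coeff (Finset.univ : Finset (Fin n))
      (fun i => ((hA.eigenvalues i : ℂ))) (k := n - k)
      (by simp)
    rw [this]
    congr 2
    · rw [Finset.card_univ, Fintype.card_fin, Nat.sub_sub_self hk2]
  have hl : (∑ j ∈ Finset.range (n + 1),
        Polynomial.C (principalMinorSum A j) * Polynomial.X ^ (n - j)).coeff (n - k)
      = principalMinorSum A k := by
    rw [Polynomial.finset_sum_coeff]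
    rw [Finset.sum_eq_single_of_mem k (Finset.mem_range.mpr (Nat.lt_succ_of_le hk2))]
    · simp [Polynomial.coeff_C_mul, Polynomial.coeff_X_pow]
    · intro j hj hjk
      have hjn : j ≤ n := Nat.lt_succ_iff.mp (Finset.mem_range.mp hj)
      have hne : n - k ≠ n - j := by
        intro hc
        apply hjk
        have h2 := congrArg (fun m => n - m) hc
        simp only [Nat.sub_sub_self hk2, Nat.sub_sub_self hjn] at h2
        exact h2.symm
      simp [Polynomial.coeff_C_mul, Polynomial.coeff_X_pow, hne]
  rw [hl] at h
  rw [h, hr]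
  push_cast
  rfl

lemma posDef_of_eigenvalues_pos {n : ℕ} (A : Matrix (Fin n) (Fin n) ℂ) (hA : A.IsHermitian)
    (h : ∀ i, 0 < hA.eigenvalues i) : A.PosDef := by
  refine Matrix.posDef_iff_dotProduct_mulVec.mpr ⟨hA, fun x hx => ?_⟩
  set U : Matrix (Fin n) (Fin n) ℂ := (Matrix.IsHermitian.eigenvectorUnitary hA : Matrix (Fin n) (Fin n) ℂ)
  have hU : U * star U = 1 := Matrix.mem_unitaryGroup_iff.mp (Matrix.IsHermitian.eigenvectorUnitary hA).2
  set D : Matrix (Fin n) (Fin n) ℂ := Matrix.diagonal (RCLike.ofReal ∘ hA.eigenvalues)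
  have hD : D.PosDef := by
    refine Matrix.PosDef.diagonal fun i => ?_
    exact Complex.zero_lt_real.mpr (h i)
  set y : Fin n → ℂ := star U *ᵥ x with hy
  have hyne : y ≠ 0 := by
    intro h0
    apply hx
    have : U *ᵥ y = 0 := by rw [h0, Matrix.mulVec_zero]
    rwa [hy, Matrix.mulVec_mulVec, hU, Matrix.one_mulVec] at this
  have hAx : A *ᵥ x = U *ᵥ (D *ᵥ y) := by
    rw [hy, Matrix.mulVec_mulVec, Matrix.mulVec_mulVec, ← (show A = U * D * star U from hA.spectral_theorem)]
  have hdot : dotProduct (star x) (A *ᵥ x) = dotProduct (star y) (D *ᵥ y) := by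
    rw [hAx, Matrix.dotProduct_mulVec (star x) U, hy]
    congr 1
    rw [Matrix.star_mulVec, Matrix.star_eq_conjTranspose, Matrix.conjTranspose_conjTranspose]
  rw [hdot]
  exact (Matrix.posDef_iff_dotProduct_mulVec.mp hD).2 hyne

theorem posDef_iff_principalMinorSums_pos {n : ℕ} (A : Matrix (Fin n) (Fin n) ℂ)
    (hA : A.IsHermitian) :
    A.PosDef ↔ ∀ k : ℕ, 1 ≤ k → k ≤ n → 0 < (principalMinorSum A k).re := by
  constructor
  · intro hpd k hk1 hk2
    rw [pms_eq_esymm A hA hk2, Complex.ofReal_re]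
    have hne : (Finset.powersetCard k (Finset.univ : Finset (Fin n))).Nonempty :=
      Finset.powersetCard_nonempty.mpr (by simp [hk2])
    refine Finset.sum_pos (fun t _ => Finset.prod_pos fun i _ => ?_) hne
    exact hpd.eigenvalues_pos i
  · intro h
    have hEpos : ∀ k, 1 ≤ k → k ≤ n →
        0 < ∑ t ∈ Finset.powersetCard k (Finset.univ : Finset (Fin n)),
          ∏ i ∈ t, hA.eigenvalues i := by
      intro k hk1 hk2
      have := h k hk1 hk2
      rwa [pms_eq_esymm A hA hk2, Complex.ofReal_re] at this
    have hE0 : (∑ t ∈ Finset.powersetCard 0 (Finset.univ : Finset (Fin n)),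
        ∏ i ∈ t, hA.eigenvalues i) = 1 := by simp
    have hmu : ∀ i, 0 < hA.eigenvalues i := by
      intro i
      by_contra hle
      push_neg at hle
      have hn : 0 < n := i.pos
      set x : ℝ := -hA.eigenvalues i with hxdef
      have hx : 0 ≤ x := by rw [hxdef]; linarith
      have hid : ((∏ j, (hA.eigenvalues j + x) : ℝ) : ℂ)
          = ((∑ k ∈ Finset.range (n+1),
              (∑ t ∈ Finset.powersetCard k (Finset.univ : Finset (Fin n)),
                ∏ i ∈ t, hA.eigenvalues i) * x ^ (n-k) : ℝ) : ℂ) := by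
        push_cast
        calc ∏ j, ((hA.eigenvalues j : ℂ) + (x:ℂ))
            = (A + (x:ℂ) • 1).det := (det_add_eq_prod_eig A hA x).symm
          _ = ∑ k ∈ Finset.range (n+1), principalMinorSum A k * (x:ℂ)^(n-k) :=
              det_add_smul_one' A x
          _ = _ := by
              refine Finset.sum_congr rfl fun k hk => ?_
              rw [pms_eq_esymm A hA (Nat.lt_succ_iff.mp (Finset.mem_range.mp hk))]
              push_cast
              ring
      have hid' : (∏ j, (hA.eigenvalues j + x) : ℝ)
          = ∑ k ∈ Finset.range (n+1),
              (∑ t ∈ Finset.powersetCard k (Finset.univ : Finset (Fin n)),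
                ∏ i ∈ t, hA.eigenvalues i) * x ^ (n-k) := by exact_mod_cast hid
      have hzero : (∏ j, (hA.eigenvalues j + x) : ℝ) = 0 :=
        Finset.prod_eq_zero (Finset.mem_univ i) (by rw [hxdef]; ring)
      have hpos : 0 < ∑ k ∈ Finset.range (n+1),
          (∑ t ∈ Finset.powersetCard k (Finset.univ : Finset (Fin n)),
            ∏ i ∈ t, hA.eigenvalues i) * x ^ (n-k) := by
        refine Finset.sum_pos' (fun k hk => ?_)
          ⟨n, Finset.mem_range.mpr (Nat.lt_succ_self n), ?_⟩
        · rcases Nat.eq_zero_or_pos k with rfl | hk1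
          · rw [hE0]; positivity
          · have hk2 : k ≤ n := Nat.lt_succ_iff.mp (Finset.mem_range.mp hk)
            have := hEpos k hk1 hk2
            positivity
        · simp only [Nat.sub_self, pow_zero, mul_one]
          exact hEpos n hn (le_refl n)
      rw [hid'] at hzero
      linarith
    exact posDef_of_eigenvalues_pos A hA hmu
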